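/- Let X be a Hilbert space, E ∈ L(X) non-negative self-adjoint, A dissipative, and suppose the open right half-plane {Re λ > ω} is contained in ρ(E,A) for some ω > 0. Then there exists K > 0 such that ‖(λE−A)⁻¹‖ ≤ K |λ|²/Re λ for all λ with Re λ > ω; in particular the complex resolvent index of (E,A) is at most 3. -/

import Mathlib

open scoped InnerProductSpace

/-- `R` is the bounded (two-sided) inverse of `λ E - A`. -/
def IsDAEResolvent {X : Type*} [NormedAddCommGroup X] [InnerProductSpace ℂ X]
    (E : X →L[ℂ] X) (A : X →ₗ.[ℂ] X) (lam : ℂ) (R : X →L[ℂ] X) : Prop :=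
  (∀ z : X, ∃ h : R z ∈ A.domain, lam • E (R z) - A ⟨R z, h⟩ = z) ∧
  (∀ x : A.domain, R (lam • E (x : X) - A x) = (x : X))

/-- Cauchy–Schwarz for the semi-inner product induced by a nonnegative self-adjoint operator. -/
lemma pos_cauchy_schwarz {X : Type*} [NormedAddCommGroup X] [InnerProductSpace ℂ X]
    [CompleteSpace X] (E : X →L[ℂ] X) (hEsa : IsSelfAdjoint E)
    (hEnn : ∀ x : X, 0 ≤ (⟪x, E x⟫_ℂ).re) (x y : X) :
    ‖⟪x, E y⟫_ℂ‖ * ‖⟪y, E x⟫_ℂ‖ ≤ (⟪x, E x⟫_ℂ).re * (⟪y, E y⟫_ℂ).re := by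
  have hsym := hEsa.isSymmetric
  let c : PreInnerProductSpace.Core ℂ X :=
    { inner := fun u v => ⟪u, E v⟫_ℂ
      conj_inner_symm := fun u v => (inner_conj_symm (E u) v).trans (hsym u v)
      re_inner_nonneg := hEnn
      add_left := fun u v w => by simp [inner_add_left]
      smul_left := fun u v r => by simp [inner_smul_left]; ring }
  exact InnerProductSpace.Core.inner_mul_inner_self_le (𝕜 := ℂ) (c := c) x y

/-- `‖E x‖² ≤ ‖E‖ · re ⟪x, E x⟫` for a nonnegative self-adjoint operator. -/
lemma pos_norm_apply_sq_le {X : Type*} [NormedAddCommGroup X] [InnerProductSpace ℂ X]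
    [CompleteSpace X] (E : X →L[ℂ] X) (hEsa : IsSelfAdjoint E)
    (hEnn : ∀ x : X, 0 ≤ (⟪x, E x⟫_ℂ).re) (x : X) :
    ‖E x‖ ^ 2 ≤ ‖E‖ * (⟪x, E x⟫_ℂ).re := by
  have hsym := hEsa.isSymmetric
  have h := pos_cauchy_schwarz E hEsa hEnn x (E x)
  have h1 : ⟪x, E (E x)⟫_ℂ = ⟪E x, E x⟫_ℂ := (hsym x (E x)).symm
  have h2 : ‖⟪E x, E x⟫_ℂ‖ = ‖E x‖ ^ 2 := by
    rw [inner_self_eq_norm_sq_to_K]; simp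
  rw [h1, h2] at h
  have h5 : (⟪E x, E (E x)⟫_ℂ).re ≤ ‖E‖ * ‖E x‖ ^ 2 := by
    have := (Complex.re_le_norm (⟪E x, E (E x)⟫_ℂ)).trans
      (norm_inner_le_norm _ _)
    have h6 : ‖E (E x)‖ ≤ ‖E‖ * ‖E x‖ := E.le_opNorm _
    nlinarith [norm_nonneg (E x), norm_nonneg E]
  by_cases h0 : ‖E x‖ = 0
  · rw [h0]
    simpa using mul_nonneg (norm_nonneg E) (hEnn x)
  · have ht : 0 < ‖E x‖ ^ 2 := by positivity
    nlinarith [hEnn x, norm_nonneg E]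

set_option maxHeartbeats 1000000 in
/-- Purely real-arithmetic core of the resolvent estimate. -/
lemma quad_bound (a M N EX cc nE r ω L : ℝ) (hω : 0 < ω) (hr : ω < r) (hrL : r ≤ L)
    (ha : 0 ≤ a) (hM : 0 ≤ M) (hEXn : 0 ≤ EX) (hccn : 0 ≤ cc) (hNn : 0 ≤ N) (hnE : 0 ≤ nE)
    (hEx2 : EX^2 * r ≤ nE * (N * M)) (hNle : N ≤ a*M + cc*(a*EX))
    (hc : cc * ω ≤ (2*ω+1) * L) :
    N ≤ (2*a*ω + a^2*(2*ω+1)^2*nE + ω^2)/ω^2 * L^2 / r * M := by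
  have hr0 : 0 < r := hω.trans hr
  have hω2 : (0:ℝ) < ω^2 := pow_pos hω 2
  have hL0 : 0 ≤ L := (hω.le.trans hr.le).trans hrL
  -- quadratic trick
  have hQ : N * r ≤ 2*a*M*r + cc^2*a^2*nE*M := by
    have haM : 0 ≤ a * M := mul_nonneg ha hM
    by_cases hcase : N ≤ 2*(a*M)
    · nlinarith [mul_le_mul_of_nonneg_right hcase hr0.le,
        mul_nonneg (mul_nonneg (mul_nonneg (sq_nonneg cc) (sq_nonneg a)) hnE) hM]
    · push_neg at hcase
      have hpos : 0 < N := lt_of_le_of_lt (by linarith) hcase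
      have h5 : N - a*M ≤ cc*(a*EX) := by linarith
      have h5n : 0 ≤ N - a*M := by linarith
      have h6 : (N - a*M)^2 ≤ cc^2*a^2*EX^2 := by
        nlinarith [mul_self_le_mul_self h5n h5]
      have h7 : (N - a*M)^2 * r ≤ cc^2*a^2*(nE*(N*M)) := by
        calc (N - a*M)^2 * r ≤ (cc^2*a^2*EX^2) * r := mul_le_mul_of_nonneg_right h6 hr0.le
        _ = cc^2*a^2*(EX^2*r) := by ring
        _ ≤ cc^2*a^2*(nE*(N*M)) :=
            mul_le_mul_of_nonneg_left hEx2 (by positivity)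
      have h8 : N * (N * r) ≤ N * (2*a*M*r + cc^2*a^2*nE*M) := by
        nlinarith [h7, mul_nonneg (mul_nonneg haM haM) hr0.le]
      exact le_of_mul_le_mul_left h8 hpos
  have hrw : r * ω ≤ L^2 := by nlinarith
  have hc2 : cc^2 * ω^2 ≤ (2*ω+1)^2 * L^2 := by
    nlinarith [mul_self_le_mul_self (mul_nonneg hccn hω.le) hc]
  have hgoal : N * r * ω^2 ≤ (2*a*ω + a^2*(2*ω+1)^2*nE + ω^2) * L^2 * M := by
    have h8 := mul_le_mul_of_nonneg_right hQ hω2.le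
    have h9 := mul_le_mul_of_nonneg_left hrw
      (by positivity : (0:ℝ) ≤ 2*a*M*ω)
    have h10 := mul_le_mul_of_nonneg_left hc2
      (by positivity : (0:ℝ) ≤ a^2*nE*M)
    nlinarith [h8, h9, h10, mul_nonneg (mul_nonneg hω2.le (sq_nonneg L)) hM]
  have h11 : (0:ℝ) < ω^2 * r := by positivity
  have heq : (2*a*ω + a^2*(2*ω+1)^2*nE + ω^2)/ω^2 * L^2 / r * M
      = (2*a*ω + a^2*(2*ω+1)^2*nE + ω^2) * L^2 * M / (ω^2 * r) := by
    ring
  rw [heq, le_div_iff₀ h11]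
  nlinarith [hgoal]

theorem stmt_4 {X : Type*} [NormedAddCommGroup X] [InnerProductSpace ℂ X] [CompleteSpace X]
    (E : X →L[ℂ] X) (hEsa : IsSelfAdjoint E)
    (hEnn : ∀ x : X, 0 ≤ (⟪x, E x⟫_ℂ).re)
    (A : X →ₗ.[ℂ] X) (hAclosed : A.IsClosed) (hAdense : Dense (A.domain : Set X))
    (hAdis : ∀ x : A.domain, (⟪(x : X), A x⟫_ℂ).re ≤ 0)
    (ω : ℝ) (hω : 0 < ω)
    (hres : ∀ lam : ℂ, ω < lam.re → ∃ R : X →L[ℂ] X, IsDAEResolvent E A lam R) :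
    ∃ K > 0, ∀ lam : ℂ, ω < lam.re →
      ∀ R : X →L[ℂ] X, IsDAEResolvent E A lam R → ‖R‖ ≤ K * ‖lam‖ ^ 2 / lam.re := by
  have hsym := hEsa.isSymmetric
  obtain ⟨S, hS⟩ := hres ((ω : ℂ) + 1) (by simp)
  have hω2 : (0:ℝ) < ω^2 := pow_pos hω 2
  refine ⟨(2*‖S‖*ω + ‖S‖^2*(2*ω+1)^2*‖E‖ + ω^2) / ω^2, ?_, ?_⟩
  · apply div_pos ?_ hω2
    nlinarith [mul_nonneg (norm_nonneg S) hω.le,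
      mul_nonneg (mul_nonneg (sq_nonneg ‖S‖) (sq_nonneg (2*ω+1))) (norm_nonneg E)]
  intro lam hlam R hR
  have hr : 0 < lam.re := hω.trans hlam
  have hKpos : (0:ℝ) < (2*‖S‖*ω + ‖S‖^2*(2*ω+1)^2*‖E‖ + ω^2) / ω^2 := by
    apply div_pos ?_ hω2
    nlinarith [mul_nonneg (norm_nonneg S) hω.le,
      mul_nonneg (mul_nonneg (sq_nonneg ‖S‖) (sq_nonneg (2*ω+1))) (norm_nonneg E)]
  refine R.opNorm_le_bound (div_nonneg (mul_nonneg hKpos.le (sq_nonneg _)) hr.le) ?_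
  intro z
  obtain ⟨hx, hx1⟩ := hR.1 z
  -- energy estimate
  have hinner : ⟪R z, lam • E (R z) - (A ⟨R z, hx⟩ : X)⟫_ℂ
      = lam * ⟪R z, E (R z)⟫_ℂ - ⟪R z, (A ⟨R z, hx⟩ : X)⟫_ℂ := by
    rw [inner_sub_right, inner_smul_right]
  rw [hx1] at hinner
  have him : (⟪R z, E (R z)⟫_ℂ).im = 0 :=
    Complex.conj_eq_iff_im.mp ((inner_conj_symm (E (R z)) (R z)).trans (hsym (R z) (R z)))
  have hdis : (⟪R z, (A ⟨R z, hx⟩ : X)⟫_ℂ).re ≤ 0 := hAdis ⟨R z, hx⟩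
  have hkey : lam.re * (⟪R z, E (R z)⟫_ℂ).re ≤ ‖R z‖ * ‖z‖ := by
    have h1 : (⟪R z, z⟫_ℂ).re ≤ ‖R z‖ * ‖z‖ :=
      (Complex.re_le_norm _).trans
        (norm_inner_le_norm _ _)
    have h2 : (⟪R z, z⟫_ℂ).re
        = lam.re * (⟪R z, E (R z)⟫_ℂ).re - (⟪R z, (A ⟨R z, hx⟩ : X)⟫_ℂ).re := by
      rw [hinner]
      simp [Complex.sub_re, Complex.mul_re, him]
    linarith
  have hEx : ‖E (R z)‖^2 ≤ ‖E‖ * (⟪R z, E (R z)⟫_ℂ).re :=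
    pos_norm_apply_sq_le E hEsa hEnn (R z)
  have hEx2 : ‖E (R z)‖^2 * lam.re ≤ ‖E‖ * (‖R z‖ * ‖z‖) := by
    calc ‖E (R z)‖^2 * lam.re ≤ (‖E‖ * (⟪R z, E (R z)⟫_ℂ).re) * lam.re :=
          mul_le_mul_of_nonneg_right hEx hr.le
    _ = ‖E‖ * (lam.re * (⟪R z, E (R z)⟫_ℂ).re) := by ring
    _ ≤ ‖E‖ * (‖R z‖ * ‖z‖) := mul_le_mul_of_nonneg_left hkey (norm_nonneg E)
  -- resolvent identity with the fixed point μ = ω + 1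
  have h3 : ((ω:ℂ)+1) • E (R z) - A ⟨R z, hx⟩
      = (lam • E (R z) - (A ⟨R z, hx⟩ : X)) - (lam - ((ω:ℂ)+1)) • E (R z) := by
    rw [sub_smul]
    abel
  rw [hx1] at h3
  have h2 := hS.2 ⟨R z, hx⟩
  rw [h3] at h2
  have h2' : S (z - (lam - ((ω:ℂ)+1)) • E (R z)) = R z := h2
  have hid : R z = S z - (lam - ((ω:ℂ)+1)) • S (E (R z)) := by
    conv_lhs => rw [← h2']
    rw [map_sub, map_smul]
  have hNle : ‖R z‖ ≤ ‖S‖ * ‖z‖ + ‖lam - ((ω:ℂ)+1)‖ * (‖S‖ * ‖E (R z)‖) := by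
    calc ‖R z‖ = ‖S z - (lam - ((ω:ℂ)+1)) • S (E (R z))‖ := by rw [← hid]
    _ ≤ ‖S z‖ + ‖(lam - ((ω:ℂ)+1)) • S (E (R z))‖ := norm_sub_le _ _
    _ = ‖S z‖ + ‖lam - ((ω:ℂ)+1)‖ * ‖S (E (R z))‖ := by rw [norm_smul]
    _ ≤ ‖S‖ * ‖z‖ + ‖lam - ((ω:ℂ)+1)‖ * (‖S‖ * ‖E (R z)‖) := by
        gcongr
        · exact S.le_opNorm z
        · exact S.le_opNorm (E (R z))
  -- size comparisons for lam
  have hrL : lam.re ≤ ‖lam‖ := Complex.re_le_norm lam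
  have hc : ‖lam - ((ω:ℂ)+1)‖ * ω ≤ (2*ω+1) * ‖lam‖ := by
    have h4 : ‖lam - ((ω:ℂ)+1)‖ ≤ ‖lam‖ + (ω+1) := by
      have h5 : ((ω:ℂ)+1) = ((ω+1 : ℝ) : ℂ) := by push_cast; ring
      calc ‖lam - ((ω:ℂ)+1)‖ ≤ ‖lam‖ + ‖((ω:ℂ)+1)‖ := norm_sub_le _ _
      _ = ‖lam‖ + (ω+1) := by
          rw [h5, Complex.norm_real, Real.norm_eq_abs, abs_of_pos (by linarith)]
    have hLω : ω ≤ ‖lam‖ := le_trans hlam.le hrL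
    nlinarith
  have := quad_bound ‖S‖ ‖z‖ ‖R z‖ ‖E (R z)‖ ‖lam - ((ω:ℂ)+1)‖ ‖E‖ lam.re ω ‖lam‖
    hω hlam hrL (norm_nonneg S) (norm_nonneg z) (norm_nonneg _) (norm_nonneg _)
    (norm_nonneg _) (norm_nonneg E) hEx2 hNle hc
  calc ‖R z‖ ≤ _ := this
  _ = (2*‖S‖*ω + ‖S‖^2*(2*ω+1)^2*‖E‖ + ω^2) / ω^2 * ‖lam‖ ^ 2 / lam.re * ‖z‖ := by ring
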